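/- Let (a_n)_{n≥0} be a sequence of nonzero complex numbers satisfying |a_0| ≥ |a_1| ≥ |a_2| ≥ ⋯ and ∑_{n=0}^∞ |a_n|² < ∞, and let T be the corresponding weighted shift. Then for a sequence (c_k)_{k≥1} of complex numbers, the sequence of partial sums p_n(T) = ∑_{k=1}^n c_k T^k converges in the operator norm to an element of A_T if and only if ∑_{k=1}^∞ |c_k|² |a_0 a_1 ⋯ a_{k−1}|² < ∞. -/

import Mathlib

set_option maxHeartbeats 1000000

noncomputable section

/-- `H = ℓ²(ℕ)` over `ℂ`. -/
abbrev H : Type := lp (fun _ : ℕ => ℂ) 2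

/-- The standard orthonormal basis of `ℓ²(ℕ)`. -/
def e (n : ℕ) : H := lp.single 2 n 1

/-- `A_T`: the operator-norm closure of the polynomials in `T` with zero constant term. -/
def polyAlg (T : H →L[ℂ] H) : Set (H →L[ℂ] H) :=
  closure ((NonUnitalAlgebra.adjoin ℂ {T} : NonUnitalSubalgebra ℂ (H →L[ℂ] H)) :
    Set (H →L[ℂ] H))

open Finset

lemma e_orthonormal : Orthonormal ℂ e := by
  rw [orthonormal_iff_ite]
  intro i j
  classical
  rw [e, lp.inner_single_left]
  simp [e, lp.single_apply, RCLike.inner_apply, Pi.single_apply]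

lemma norm_sum_sq {v : ℕ → H} (hv : Orthonormal ℂ v) (d : ℕ → ℂ) (F : Finset ℕ) :
    ‖∑ k ∈ F, d k • v k‖ ^ 2 = ∑ k ∈ F, ‖d k‖ ^ 2 := by
  have h := hv.inner_sum d d F
  have h2 := @inner_self_eq_norm_sq ℂ H _ _ _ (∑ k ∈ F, d k • v k)
  rw [← h2, h]
  simp [RCLike.conj_mul, ← Complex.ofReal_pow]

variable {a : ℕ → ℂ} {T : H →L[ℂ] H}

lemma shift_pow_apply (hT : ∀ n, T (e n) = a n • e (n + 1)) (k n : ℕ) :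
    (T ^ k) (e n) = (∏ i ∈ Finset.Ico n (n + k), a i) • e (n + k) := by
  induction k generalizing n with
  | zero => simp
  | succ k ih =>
    have : T ^ (k + 1) = T ^ k * T := pow_succ T k
    rw [this]
    have h1 : (T ^ k * T) (e n) = (T ^ k) (T (e n)) := rfl
    rw [h1, hT, map_smul, ih (n+1)]
    rw [smul_smul, Finset.prod_eq_prod_Ico_succ_bot (by omega : n < n + (k + 1))]
    rw [show n + (k + 1) = n + 1 + k by omega]

lemma norm_mono (hdec : ∀ n, ‖a (n + 1)‖ ≤ ‖a n‖) (j n : ℕ) : ‖a (j + n)‖ ≤ ‖a j‖ := by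
  induction n with
  | zero => simp
  | succ n ih => exact le_trans (by rw [show j + (n+1) = (j+n)+1 by omega]; exact hdec _) ih

lemma gamma_bound (hdec : ∀ n, ‖a (n + 1)‖ ≤ ‖a n‖) {k : ℕ} (hk : 1 ≤ k) (n : ℕ) :
    ‖∏ i ∈ Finset.Ico n (n + k), a i‖ * ‖a 0‖ ≤
      ‖a n‖ * ‖∏ i ∈ Finset.range k, a i‖ := by
  rw [norm_prod, norm_prod]
  rw [Finset.range_eq_Ico,
    Finset.prod_eq_prod_Ico_succ_bot (by omega : n < n + k) (fun i => ‖a i‖),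
    Finset.prod_eq_prod_Ico_succ_bot (by omega : 0 < k) (fun i => ‖a i‖)]
  rw [Finset.prod_Ico_eq_prod_range, Finset.prod_Ico_eq_prod_range]
  have key : ∏ i ∈ Finset.range (n + k - (n + 1)), ‖a (n + 1 + i)‖ ≤
      ∏ i ∈ Finset.range (k - 1), ‖a (0 + 1 + i)‖ := by
    rw [show n + k - (n + 1) = k - 1 by omega]
    refine Finset.prod_le_prod (fun i _ => norm_nonneg _) (fun i _ => ?_)
    rw [show n + 1 + i = (0 + 1 + i) + n by omega]
    exact norm_mono hdec _ _
  calc ‖a n‖ * (∏ i ∈ Finset.range (n + k - (n + 1)), ‖a (n + 1 + i)‖) * ‖a 0‖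
      ≤ ‖a n‖ * (∏ i ∈ Finset.range (k - 1), ‖a (0 + 1 + i)‖) * ‖a 0‖ := by
        apply mul_le_mul_of_nonneg_right _ (norm_nonneg _)
        exact mul_le_mul_of_nonneg_left key (norm_nonneg _)
    _ = ‖a n‖ * (‖a 0‖ * ∏ i ∈ Finset.range (k - 1), ‖a (0 + 1 + i)‖) := by ring

lemma e_apply_bound (ha0 : a 0 ≠ 0) (hdec : ∀ n, ‖a (n + 1)‖ ≤ ‖a n‖)
    (hT : ∀ n, T (e n) = a n • e (n + 1)) (c : ℕ → ℂ)
    (F : Finset ℕ) (hF : ∀ k ∈ F, 1 ≤ k) (n : ℕ) :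
    ‖(∑ k ∈ F, c k • T ^ k) (e n)‖ ≤
      ‖a n‖ / ‖a 0‖ *
        Real.sqrt (∑ k ∈ F, ‖c k‖ ^ 2 * ‖∏ i ∈ Finset.range k, a i‖ ^ 2) := by
  have ha0' : (0:ℝ) < ‖a 0‖ := norm_pos_iff.2 ha0
  set γ : ℕ → ℂ := fun k => c k * ∏ i ∈ Finset.Ico n (n + k), a i with hγ
  have happ : (∑ k ∈ F, c k • T ^ k) (e n) = ∑ k ∈ F, γ k • e (n + k) := by
    rw [ContinuousLinearMap.sum_apply]
    refine Finset.sum_congr rfl fun k _ => ?_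
    rw [ContinuousLinearMap.smul_apply, shift_pow_apply hT, smul_smul]
  have hon : Orthonormal ℂ (fun k => e (n + k)) :=
    e_orthonormal.comp _ (fun k l h => by omega)
  have hsq : ‖(∑ k ∈ F, c k • T ^ k) (e n)‖ ^ 2 = ∑ k ∈ F, ‖γ k‖ ^ 2 := by
    rw [happ]; exact norm_sum_sq hon γ F
  have hterm : ∀ k ∈ F, ‖γ k‖ ^ 2 ≤
      (‖a n‖ / ‖a 0‖) ^ 2 * (‖c k‖ ^ 2 * ‖∏ i ∈ Finset.range k, a i‖ ^ 2) := by
    intro k hk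
    have hb := gamma_bound hdec (hF k hk) n
    have hb2 : ‖∏ i ∈ Finset.Ico n (n + k), a i‖ ≤
        ‖a n‖ / ‖a 0‖ * ‖∏ i ∈ Finset.range k, a i‖ := by
      rw [div_mul_eq_mul_div, le_div_iff₀ ha0']
      linarith [hb]
    have : ‖γ k‖ = ‖c k‖ * ‖∏ i ∈ Finset.Ico n (n + k), a i‖ := by
      rw [hγ]; simp [norm_mul]
    rw [this, mul_pow]
    have h3 : ‖∏ i ∈ Finset.Ico n (n + k), a i‖ ^ 2 ≤
        (‖a n‖ / ‖a 0‖ * ‖∏ i ∈ Finset.range k, a i‖) ^ 2 := by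
      apply pow_le_pow_left₀ (norm_nonneg _) hb2
    calc ‖c k‖ ^ 2 * ‖∏ i ∈ Finset.Ico n (n + k), a i‖ ^ 2
        ≤ ‖c k‖ ^ 2 * (‖a n‖ / ‖a 0‖ * ‖∏ i ∈ Finset.range k, a i‖) ^ 2 :=
          mul_le_mul_of_nonneg_left h3 (sq_nonneg _)
      _ = (‖a n‖ / ‖a 0‖) ^ 2 * (‖c k‖ ^ 2 * ‖∏ i ∈ Finset.range k, a i‖ ^ 2) := by ring
  have hsum2 : ‖(∑ k ∈ F, c k • T ^ k) (e n)‖ ^ 2 ≤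
      (‖a n‖ / ‖a 0‖) ^ 2 * ∑ k ∈ F, ‖c k‖ ^ 2 * ‖∏ i ∈ Finset.range k, a i‖ ^ 2 := by
    rw [hsq, Finset.mul_sum]
    exact Finset.sum_le_sum hterm
  have hR : (0:ℝ) ≤ ‖a n‖ / ‖a 0‖ * Real.sqrt (∑ k ∈ F, ‖c k‖ ^ 2 * ‖∏ i ∈ Finset.range k, a i‖ ^ 2) :=
    mul_nonneg (div_nonneg (norm_nonneg _) (norm_nonneg _)) (Real.sqrt_nonneg _)
  rw [← pow_le_pow_iff_left₀ (norm_nonneg _) hR (two_ne_zero)]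
  calc ‖(∑ k ∈ F, c k • T ^ k) (e n)‖ ^ 2
      ≤ (‖a n‖ / ‖a 0‖) ^ 2 * ∑ k ∈ F, ‖c k‖ ^ 2 * ‖∏ i ∈ Finset.range k, a i‖ ^ 2 := hsum2
    _ = (‖a n‖ / ‖a 0‖ * Real.sqrt (∑ k ∈ F, ‖c k‖ ^ 2 * ‖∏ i ∈ Finset.range k, a i‖ ^ 2)) ^ 2 := by
        rw [mul_pow, Real.sq_sqrt (Finset.sum_nonneg fun k _ => mul_nonneg (sq_nonneg _) (sq_nonneg _))]

lemma opnorm_bound (ha0 : a 0 ≠ 0) (hdec : ∀ n, ‖a (n + 1)‖ ≤ ‖a n‖)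
    (hsum : Summable fun n => ‖a n‖ ^ 2)
    (hT : ∀ n, T (e n) = a n • e (n + 1)) (c : ℕ → ℂ)
    (F : Finset ℕ) (hF : ∀ k ∈ F, 1 ≤ k) :
    ‖∑ k ∈ F, c k • T ^ k‖ ≤
      Real.sqrt (∑' n, ‖a n‖ ^ 2) / ‖a 0‖ *
        Real.sqrt (∑ k ∈ F, ‖c k‖ ^ 2 * ‖∏ i ∈ Finset.range k, a i‖ ^ 2) := by
  have ha0' : (0:ℝ) < ‖a 0‖ := norm_pos_iff.2 ha0
  set A : ℝ := ∑' n, ‖a n‖ ^ 2 with hA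
  set M : ℝ := Real.sqrt (∑ k ∈ F, ‖c k‖ ^ 2 * ‖∏ i ∈ Finset.range k, a i‖ ^ 2) with hM
  have hAnn : (0:ℝ) ≤ A := tsum_nonneg fun n => sq_nonneg _
  have hMnn : (0:ℝ) ≤ M := Real.sqrt_nonneg _
  set S : H →L[ℂ] H := ∑ k ∈ F, c k • T ^ k with hS
  refine ContinuousLinearMap.opNorm_le_bound _
    (mul_nonneg (div_nonneg (Real.sqrt_nonneg _) ha0'.le) hMnn) (fun x => ?_)
  set xc : ℕ → ℂ := fun n => x n with hxc
  have h2R : (0:ℝ) < ENNReal.toReal 2 := by norm_num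
  have hx2 : Summable (fun n => ‖xc n‖ ^ 2) := by
    have := (lp.memℓp x).summable h2R
    simpa [ENNReal.toReal_ofNat, Real.rpow_natCast] using this
  have hnx : ‖x‖ ^ 2 = ∑' n, ‖xc n‖ ^ 2 := by
    have := lp.norm_rpow_eq_tsum h2R x
    simpa [ENNReal.toReal_ofNat, Real.rpow_natCast] using this
  have hbound : ∀ u : Finset ℕ, ∑ n ∈ u, ‖xc n‖ * ‖a n‖ ≤ ‖x‖ * Real.sqrt A := by
    intro u
    have h1 := Finset.sum_mul_sq_le_sq_mul_sq u (fun n => ‖xc n‖) (fun n => ‖a n‖)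
    have h2 : ∑ n ∈ u, ‖xc n‖ ^ 2 ≤ ‖x‖ ^ 2 := by
      rw [hnx]; exact Summable.sum_le_tsum u (fun i _ => sq_nonneg _) hx2
    have h3 : ∑ n ∈ u, ‖a n‖ ^ 2 ≤ A := Summable.sum_le_tsum u (fun i _ => sq_nonneg _) hsum
    have hs_nn : (0:ℝ) ≤ ∑ n ∈ u, ‖xc n‖ * ‖a n‖ :=
      Finset.sum_nonneg fun n _ => mul_nonneg (norm_nonneg _) (norm_nonneg _)
    have hrhs_nn : (0:ℝ) ≤ ‖x‖ * Real.sqrt A := mul_nonneg (norm_nonneg _) (Real.sqrt_nonneg _)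
    rw [← pow_le_pow_iff_left₀ hs_nn hrhs_nn two_ne_zero]
    calc (∑ n ∈ u, ‖xc n‖ * ‖a n‖) ^ 2
        ≤ (∑ n ∈ u, ‖xc n‖ ^ 2) * (∑ n ∈ u, ‖a n‖ ^ 2) := h1
      _ ≤ ‖x‖ ^ 2 * A := by
          apply mul_le_mul h2 h3 (Finset.sum_nonneg fun n _ => sq_nonneg _) (sq_nonneg _)
      _ = (‖x‖ * Real.sqrt A) ^ 2 := by rw [mul_pow, Real.sq_sqrt hAnn]
  have hxa_sum : Summable (fun n => ‖xc n‖ * ‖a n‖) :=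
    summable_of_sum_le (fun n => mul_nonneg (norm_nonneg _) (norm_nonneg _)) hbound
  have hxa_tsum : ∑' n, ‖xc n‖ * ‖a n‖ ≤ ‖x‖ * Real.sqrt A :=
    Summable.tsum_le_of_sum_le hxa_sum hbound
  have heB : ∀ n, ‖xc n • S (e n)‖ ≤ M / ‖a 0‖ * (‖xc n‖ * ‖a n‖) := by
    intro n
    rw [norm_smul]
    have := e_apply_bound ha0 hdec hT c F hF n
    calc ‖xc n‖ * ‖S (e n)‖ ≤ ‖xc n‖ * (‖a n‖ / ‖a 0‖ * M) :=
          mul_le_mul_of_nonneg_left this (norm_nonneg _)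
      _ = M / ‖a 0‖ * (‖xc n‖ * ‖a n‖) := by ring
  have hhsx : HasSum (fun n => xc n • S (e n)) (S x) := by
    have h0 : HasSum (fun n => lp.single 2 n (xc n)) x :=
      lp.hasSum_single ENNReal.ofNat_ne_top x
    have h1 := h0.mapL S
    refine HasSum.congr_fun h1 fun n => ?_
    rw [e, ← map_smul]
    congr 1
    rw [← lp.single_smul, smul_eq_mul, mul_one]
  have hdom : Summable (fun n => M / ‖a 0‖ * (‖xc n‖ * ‖a n‖)) := hxa_sum.mul_left _
  have hnorm_sum : Summable (fun n => ‖xc n • S (e n)‖) :=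
    Summable.of_nonneg_of_le (fun n => norm_nonneg _) heB hdom
  have h5 : ‖S x‖ ≤ ∑' n, ‖xc n • S (e n)‖ := by
    rw [← hhsx.tsum_eq]
    exact norm_tsum_le_tsum_norm hnorm_sum
  have h6 : ∑' n, ‖xc n • S (e n)‖ ≤ ∑' n, M / ‖a 0‖ * (‖xc n‖ * ‖a n‖) :=
    Summable.tsum_le_tsum heB hnorm_sum hdom
  have h7 : ∑' n, M / ‖a 0‖ * (‖xc n‖ * ‖a n‖) = M / ‖a 0‖ * ∑' n, ‖xc n‖ * ‖a n‖ :=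
    tsum_mul_left
  have h8 : M / ‖a 0‖ * (∑' n, ‖xc n‖ * ‖a n‖) ≤ M / ‖a 0‖ * (‖x‖ * Real.sqrt A) :=
    mul_le_mul_of_nonneg_left hxa_tsum (div_nonneg hMnn ha0'.le)
  calc ‖S x‖ ≤ M / ‖a 0‖ * (‖x‖ * Real.sqrt A) := by
        refine le_trans h5 (le_trans h6 ?_)
        rw [h7]; exact h8
    _ = Real.sqrt A / ‖a 0‖ * M * ‖x‖ := by ring

/-- For a weighted shift with nonzero weights, `|a_0| ≥ |a_1| ≥ ⋯` and `∑ |a_n|² < ∞`: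
the partial sums `p_n(T) = ∑_{k=1}^n c_k T^k` converge in operator norm to an element of
`A_T` if and only if `∑_{k=1}^∞ |c_k|² |a_0 ⋯ a_{k-1}|² < ∞`. -/
theorem partial_sums_converge_iff (a : ℕ → ℂ) (ha : ∀ n, a n ≠ 0)
    (hdec : ∀ n, ‖a (n + 1)‖ ≤ ‖a n‖)
    (hsum : Summable fun n => ‖a n‖ ^ 2)
    (T : H →L[ℂ] H) (hT : ∀ n, T (e n) = a n • e (n + 1))
    (c : ℕ → ℂ) :
    (∃ S ∈ polyAlg T,
        Filter.Tendsto (fun n : ℕ => ∑ k ∈ Finset.Icc 1 n, c k • T ^ k)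
          Filter.atTop (nhds S)) ↔
      Summable (fun k : ℕ =>
        ‖c (k + 1)‖ ^ 2 * ‖∏ i ∈ Finset.range (k + 1), a i‖ ^ 2) := by
  classical
  set g : ℕ → ℝ := fun k => ‖c k‖ ^ 2 * ‖∏ i ∈ Finset.range k, a i‖ ^ 2 with hg
  have hgnn : ∀ k, 0 ≤ g k := fun k => mul_nonneg (sq_nonneg _) (sq_nonneg _)
  set p : ℕ → (H →L[ℂ] H) := fun n => ∑ k ∈ Finset.Icc 1 n, c k • T ^ k with hp
  constructor
  · rintro ⟨S, _, hTend⟩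
    have happ : ∀ n, p n (e 0) =
        ∑ k ∈ Finset.Icc 1 n, (c k * ∏ i ∈ Finset.range k, a i) • e k := by
      intro n
      rw [hp, ContinuousLinearMap.sum_apply]
      refine Finset.sum_congr rfl fun k _ => ?_
      rw [ContinuousLinearMap.smul_apply, shift_pow_apply hT, smul_smul, zero_add,
        Finset.range_eq_Ico]
    have hq : Filter.Tendsto (fun n => p n (e 0)) Filter.atTop (nhds (S (e 0))) := by
      have hcont : Continuous fun B : H →L[ℂ] H => B (e 0) :=
        (ContinuousLinearMap.apply ℂ H (e 0)).continuous
      exact (hcont.tendsto S).comp hTend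
    have hGn : ∀ n, ‖p n (e 0)‖ ^ 2 = ∑ k ∈ Finset.Icc 1 n, g k := by
      intro n
      rw [happ, norm_sum_sq e_orthonormal]
      refine Finset.sum_congr rfl fun k _ => ?_
      rw [norm_mul, mul_pow]
    have hG : Filter.Tendsto (fun n => ∑ k ∈ Finset.Icc 1 n, g k)
        Filter.atTop (nhds (‖S (e 0)‖ ^ 2)) := by
      have := (hq.norm).pow 2
      simpa [hGn] using this
    have hmono : Monotone fun n => ∑ k ∈ Finset.Icc 1 n, g k := by
      intro m n hmn
      exact Finset.sum_le_sum_of_subset_of_nonneg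
        (Finset.Icc_subset_Icc_right hmn) (fun k _ _ => hgnn k)
    have hle : ∀ n, ∑ k ∈ Finset.Icc 1 n, g k ≤ ‖S (e 0)‖ ^ 2 :=
      fun n => hmono.ge_of_tendsto hG n
    apply summable_of_sum_range_le (c := ‖S (e 0)‖ ^ 2) (fun k => hgnn (k + 1))
    intro n
    have : ∑ i ∈ Finset.range n, g (i + 1) = ∑ k ∈ Finset.Icc 1 n, g k := by
      rw [show Finset.Icc 1 n = Finset.Ico 1 (n + 1) by rw [Finset.Ico_add_one_right_eq_Icc],
        Finset.sum_Ico_eq_sum_range]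
      simp [add_comm]
    rw [this]
    exact hle n
  · intro hsummable
    set A : ℝ := ∑' n, ‖a n‖ ^ 2 with hA
    set C : ℝ := Real.sqrt A / ‖a 0‖ with hC
    have hCnn : 0 ≤ C := div_nonneg (Real.sqrt_nonneg _) (norm_nonneg _)
    set g' : ℕ → ℝ := fun k => g (k + 1) with hg'
    have hg'sum : Summable g' := hsummable
    set t : ℕ → ℝ := fun N => ∑' j, g' (j + N) with ht
    have htnn : ∀ N, 0 ≤ t N := fun N => tsum_nonneg fun j => hgnn _
    have hdiff : ∀ m n : ℕ, m ≤ n → p n - p m = ∑ k ∈ Finset.Ioc m n, c k • T ^ k := by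
      intro m n hmn
      show (∑ k ∈ Finset.Icc 1 n, c k • T ^ k) - (∑ k ∈ Finset.Icc 1 m, c k • T ^ k) =
        ∑ k ∈ Finset.Ioc m n, c k • T ^ k
      rw [show Finset.Icc 1 n = Finset.Ioc 0 n from Finset.Icc_add_one_left_eq_Ioc 0 n,
        show Finset.Icc 1 m = Finset.Ioc 0 m from Finset.Icc_add_one_left_eq_Ioc 0 m]
      rw [← Finset.sum_Ioc_consecutive _ (Nat.zero_le m) hmn]
      abel
    have hnormdiff : ∀ N m n : ℕ, N ≤ m → m ≤ n → ‖p n - p m‖ ≤ C * Real.sqrt (t N) := by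
      intro N m n hNm hmn
      rw [hdiff m n hmn]
      have h1 := opnorm_bound (ha 0) hdec hsum hT c (Finset.Ioc m n)
        (fun k hk => by simp at hk; omega)
      refine le_trans h1 ?_
      rw [← hA, ← hC]
      apply mul_le_mul_of_nonneg_left _ hCnn
      apply Real.sqrt_le_sqrt
      have hsub : ∑ k ∈ Finset.Ioc m n, g k ≤ ∑ k ∈ Finset.Ioc N n, g k :=
        Finset.sum_le_sum_of_subset_of_nonneg
          (Finset.Ioc_subset_Ioc_left hNm) (fun k _ _ => hgnn k)
      refine le_trans hsub ?_
      have heq : ∑ k ∈ Finset.Ioc N n, g k = ∑ i ∈ Finset.range (n + 1 - (N + 1)), g' (i + N) := by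
        rw [show Finset.Ioc N n = Finset.Ico (N + 1) (n + 1) by
            rw [Finset.Ico_add_one_add_one_eq_Ioc], Finset.sum_Ico_eq_sum_range]
        refine Finset.sum_congr rfl fun i _ => ?_
        rw [hg']
        congr 1
        omega
      rw [heq, ht]
      exact Summable.sum_le_tsum _ (fun i _ => hgnn _) ((summable_nat_add_iff N).mpr hg'sum)
    have hcauchy : CauchySeq p := by
      apply cauchySeq_of_le_tendsto_0 (fun N => C * Real.sqrt (t N))
      · intro n m N hn hm
        rcases le_total m n with h | h
        · rw [dist_eq_norm]
          exact hnormdiff N m n hm h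
        · rw [dist_comm, dist_eq_norm]
          exact hnormdiff N n m hn h
      · have h0 : Filter.Tendsto t Filter.atTop (nhds 0) := tendsto_sum_nat_add g'
        have := (Real.continuous_sqrt.tendsto 0).comp h0
        rw [Real.sqrt_zero] at this
        simpa using this.const_mul C
    obtain ⟨S, hS⟩ := cauchySeq_tendsto_of_complete hcauchy
    refine ⟨S, ?_, hS⟩
    have hpow : ∀ k : ℕ, 1 ≤ k → T ^ k ∈ NonUnitalAlgebra.adjoin ℂ ({T} : Set (H →L[ℂ] H)) := by
      intro k hk
      induction k, hk using Nat.le_induction with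
      | base => simpa using NonUnitalAlgebra.self_mem_adjoin_singleton ℂ T
      | succ k hk ih =>
        rw [pow_succ]
        exact mul_mem ih (NonUnitalAlgebra.self_mem_adjoin_singleton ℂ T)
    apply mem_closure_of_tendsto hS
    filter_upwards with n
    rw [SetLike.mem_coe]
    exact sum_mem fun k hk =>
      SMulMemClass.smul_mem _ (hpow k (by simp at hk; omega))
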